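/- Set γ = 1 − c₃/c₂ ∈ [0, 1). Then for every x ∈ ℝᴺ and every i ∈ ℕ, the i-th iterate satisfies |Pⁱ(x)|² ≤ (c₂/c₁) γⁱ |x|² + (c₂ d)/(c₁ c₃); in particular |Pⁱ(x)| ≤ √(c₂/c₁) γ^{i/2} |x| + √((c₂ d)/(c₁ c₃)). (Exponential ultimate boundedness of a discrete-time system admitting a quadratically sandwiched Lyapunov function with quadratic decrease up to a constant disturbance.) -/

import Mathlib

/-- Exponential ultimate boundedness of a discrete-time system admitting
a quadratically sandwiched Lyapunov function with quadratic decrease up to a constant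
disturbance: with `γ = 1 − c₃/c₂ ∈ [0,1)`, every iterate satisfies
`|Pⁱ(x)|² ≤ (c₂/c₁) γⁱ |x|² + (c₂ d)/(c₁ c₃)` and
`|Pⁱ(x)| ≤ √(c₂/c₁) γ^{i/2} |x| + √((c₂ d)/(c₁ c₃))`. -/
theorem stmt_13 {N : ℕ} (hN : 1 ≤ N)
    (P : EuclideanSpace ℝ (Fin N) → EuclideanSpace ℝ (Fin N))
    (V : EuclideanSpace ℝ (Fin N) → ℝ)
    (c₁ c₂ c₃ d : ℝ)
    (hc1 : 0 < c₁) (hc12 : c₁ ≤ c₂) (hc3 : 0 < c₃) (hc32 : c₃ ≤ c₂) (hd : 0 ≤ d)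
    (hsand : ∀ x, c₁ * ‖x‖ ^ 2 ≤ V x ∧ V x ≤ c₂ * ‖x‖ ^ 2)
    (hdec : ∀ x, V (P x) - V x ≤ -c₃ * ‖x‖ ^ 2 + d) :
    (1 - c₃ / c₂) ∈ Set.Ico (0:ℝ) 1 ∧
    ∀ (x : EuclideanSpace ℝ (Fin N)) (i : ℕ),
      ‖P^[i] x‖ ^ 2 ≤ c₂ / c₁ * (1 - c₃ / c₂) ^ i * ‖x‖ ^ 2 + c₂ * d / (c₁ * c₃) ∧
      ‖P^[i] x‖ ≤ Real.sqrt (c₂ / c₁) * Real.sqrt (1 - c₃ / c₂) ^ i * ‖x‖ +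
        Real.sqrt (c₂ * d / (c₁ * c₃)) := by
  have hc2 : (0:ℝ) < c₂ := lt_of_lt_of_le hc1 hc12
  set γ : ℝ := 1 - c₃ / c₂ with hγ
  have hγ0 : 0 ≤ γ := by
    have h : c₃ / c₂ ≤ 1 := (div_le_one hc2).2 hc32
    simp only [hγ]; linarith
  have hγ1 : γ < 1 := by
    have : 0 < c₃ / c₂ := div_pos hc3 hc2
    simp only [hγ]; linarith
  refine ⟨⟨hγ0, hγ1⟩, ?_⟩
  -- key step : V (P y) ≤ γ * V y + d
  have hstep : ∀ y, V (P y) ≤ γ * V y + d := by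
    intro y
    have h1 := (hsand y).2
    have h2 := hdec y
    have h3 : c₃ / c₂ * V y ≤ c₃ * ‖y‖ ^ 2 := by
      rw [div_mul_eq_mul_div, div_le_iff₀ hc2]
      calc c₃ * V y ≤ c₃ * (c₂ * ‖y‖ ^ 2) := by
            exact mul_le_mul_of_nonneg_left h1 hc3.le
        _ = c₃ * ‖y‖ ^ 2 * c₂ := by ring
    have : γ * V y = V y - c₃ / c₂ * V y := by ring
    rw [this]; nlinarith
  have hVnn : ∀ y, 0 ≤ V y := fun y =>
    le_trans (by positivity) (hsand y).1
  -- induction : V (P^[i] x) ≤ γ^i * V x + c₂ * d / c₃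
  have hiter : ∀ x i, V (P^[i] x) ≤ γ ^ i * V x + c₂ * d / c₃ := by
    intro x i
    induction i with
    | zero =>
      simp only [Function.iterate_zero, id_eq, pow_zero, one_mul]
      have : 0 ≤ c₂ * d / c₃ := by positivity
      linarith
    | succ n ih =>
      rw [Function.iterate_succ_apply']
      calc V (P (P^[n] x)) ≤ γ * V (P^[n] x) + d := hstep _
        _ ≤ γ * (γ ^ n * V x + c₂ * d / c₃) + d :=
            by nlinarith [mul_le_mul_of_nonneg_left ih hγ0]
        _ = γ ^ (n + 1) * V x + (γ * (c₂ * d / c₃) + d) := by ring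
        _ = γ ^ (n + 1) * V x + c₂ * d / c₃ := by
            congr 1
            field_simp [hγ]
            linear_combination d * c₂ * hγ - d * (div_mul_cancel₀ c₃ hc2.ne')
  intro x i
  have hsq : ‖P^[i] x‖ ^ 2 ≤ c₂ / c₁ * γ ^ i * ‖x‖ ^ 2 + c₂ * d / (c₁ * c₃) := by
    have h1 := (hsand (P^[i] x)).1
    have h2 := hiter x i
    have h3 := (hsand x).2
    have h4 : γ ^ i * V x ≤ γ ^ i * (c₂ * ‖x‖ ^ 2) :=
      mul_le_mul_of_nonneg_left h3 (pow_nonneg hγ0 i)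
    have h5 : c₁ * ‖P^[i] x‖ ^ 2 ≤ c₂ * γ ^ i * ‖x‖ ^ 2 + c₂ * d / c₃ := by
      nlinarith
    calc ‖P^[i] x‖ ^ 2 ≤ (c₂ * γ ^ i * ‖x‖ ^ 2 + c₂ * d / c₃) / c₁ :=
          (le_div_iff₀' hc1).2 h5
      _ = c₂ / c₁ * γ ^ i * ‖x‖ ^ 2 + c₂ * d / (c₁ * c₃) := by
          field_simp
  refine ⟨hsq, ?_⟩
  set a := c₂ / c₁ * γ ^ i * ‖x‖ ^ 2 with ha_def
  set b := c₂ * d / (c₁ * c₃) with hb_def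
  have ha : (0:ℝ) ≤ a := by positivity
  have hb : (0:ℝ) ≤ b := by positivity
  have h1 : ‖P^[i] x‖ ≤ Real.sqrt (a + b) := by
    rw [show ‖P^[i] x‖ = Real.sqrt (‖P^[i] x‖ ^ 2) from
      (Real.sqrt_sq (norm_nonneg _)).symm]
    exact Real.sqrt_le_sqrt hsq
  have hkey : a + b ≤ (Real.sqrt a + Real.sqrt b) ^ 2 := by
    have e1 : Real.sqrt a ^ 2 = a := Real.sq_sqrt ha
    have e2 : Real.sqrt b ^ 2 = b := Real.sq_sqrt hb
    have e3 : 0 ≤ Real.sqrt a * Real.sqrt b :=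
      mul_nonneg (Real.sqrt_nonneg a) (Real.sqrt_nonneg b)
    nlinarith
  have hsplit : Real.sqrt (a + b) ≤ Real.sqrt a + Real.sqrt b :=
    (Real.sqrt_le_sqrt hkey).trans_eq (Real.sqrt_sq (by positivity))
  have hsa : Real.sqrt a = Real.sqrt (c₂ / c₁) * Real.sqrt γ ^ i * ‖x‖ := by
    rw [ha_def, Real.sqrt_mul (by positivity), Real.sqrt_mul (by positivity),
      Real.sqrt_sq (norm_nonneg _),
      show γ ^ i = (Real.sqrt γ ^ i) ^ 2 by
        rw [← pow_mul, mul_comm, pow_mul, Real.sq_sqrt hγ0],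
      Real.sqrt_sq (pow_nonneg (Real.sqrt_nonneg _) _)]
  calc ‖P^[i] x‖ ≤ Real.sqrt (a + b) := h1
    _ ≤ Real.sqrt a + Real.sqrt b := hsplit
    _ = Real.sqrt (c₂ / c₁) * Real.sqrt γ ^ i * ‖x‖ + Real.sqrt b := by rw [hsa]
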